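/- Finite identity equivalent to Jackson's ₂φ₁-to-₂φ₂ transformation: for integers m, n ≥ 0 and complex b, q with (b;q)_{m+n+1} ≠ 0, Σ_{k=0}^{n} (-1)^{n-k} [n k]_q q^{binom(k,2)} / (b q^{n-k};q)_{m+1} = [m+n, m]_q · b^n q^{binom(n,2)} (q;q)_n / (b;q)_{m+n+1}. -/

import Mathlib

noncomputable def qpoch (a q : ℂ) (n : ℕ) : ℂ := ∏ i ∈ Finset.range n, (1 - a * q ^ i)

noncomputable def qbinom (q : ℂ) (n k : ℕ) : ℂ :=
  qpoch q q n / (qpoch q q k * qpoch q q (n - k))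

lemma qpoch_zero (a q : ℂ) : qpoch a q 0 = 1 := by simp [qpoch]

lemma qpoch_succ (a q : ℂ) (n : ℕ) :
    qpoch a q (n + 1) = qpoch a q n * (1 - a * q ^ n) :=
  Finset.prod_range_succ _ _

lemma qpoch_succ' (a q : ℂ) (n : ℕ) :
    qpoch a q (n + 1) = (1 - a) * qpoch (a * q) q n := by
  rw [qpoch, Finset.prod_range_succ', qpoch]
  simp only [pow_zero, mul_one]
  rw [mul_comm]
  congr 1
  apply Finset.prod_congr rfl
  intro i _
  ring

lemma qpoch_ne_zero {a q : ℂ} (n : ℕ) (h : ∀ i < n, 1 - a * q ^ i ≠ 0) :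
    qpoch a q n ≠ 0 := by
  rw [qpoch]
  exact Finset.prod_ne_zero_iff.2 fun i hi => h i (Finset.mem_range.1 hi)

lemma tri (k : ℕ) : (k + 1) * k / 2 = k * (k - 1) / 2 + k := by
  have h1 : (k + 1) * k = k * (k - 1) + k * 2 := by
    cases k with
    | zero => rfl
    | succ j => simp [Nat.succ_sub_one]; ring
  rw [h1, Nat.add_mul_div_right _ _ (by norm_num : 0 < 2)]

lemma qbinom_zero (q : ℂ) (n : ℕ) (h : qpoch q q n ≠ 0) : qbinom q n 0 = 1 := by
  rw [qbinom, Nat.sub_zero, qpoch_zero, one_mul, div_self h]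

lemma qbinom_self (q : ℂ) (n : ℕ) (h : qpoch q q n ≠ 0) : qbinom q n n = 1 := by
  rw [qbinom, Nat.sub_self, qpoch_zero, mul_one, div_self h]

lemma qbinom_pascal (q : ℂ) (k j : ℕ) (hp : ∀ i ≤ k + j + 2, qpoch q q i ≠ 0) :
    qbinom q (k + 1 + j + 1) (k + 1)
      = qbinom q (k + 1 + j) (k + 1) + q ^ (j + 1) * qbinom q (k + 1 + j) k := by
  have hk : qpoch q q k ≠ 0 := hp k (by omega)
  have hj : qpoch q q j ≠ 0 := hp j (by omega)
  have hk1 : (1 - q * q ^ k) ≠ 0 := by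
    have h := hp (k + 1) (by omega)
    rw [qpoch_succ] at h
    exact (mul_ne_zero_iff.1 h).2
  have hj1 : (1 - q * q ^ j) ≠ 0 := by
    have h := hp (j + 1) (by omega)
    rw [qpoch_succ] at h
    exact (mul_ne_zero_iff.1 h).2
  rw [qbinom, qbinom, qbinom,
    show k + 1 + j + 1 - (k + 1) = j + 1 from by omega,
    show k + 1 + j - (k + 1) = j from by omega,
    show k + 1 + j - k = j + 1 from by omega,
    qpoch_succ q q (k + 1 + j), qpoch_succ q q k, qpoch_succ q q j]
  field_simp
  ring

lemma step3 (q b : ℂ) (m k j : ℕ) (hp : ∀ i ≤ k + j + 2, qpoch q q i ≠ 0) :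
    (-1 : ℂ) ^ (k + 1 + j + 1 - (k + 1)) * qbinom q (k + 1 + j + 1) (k + 1) *
        q ^ ((k + 1) * (k + 1 - 1) / 2) *
        (1 / qpoch (b * q ^ (k + 1 + j + 1 - (k + 1))) q (m + 1))
      = -((-1 : ℂ) ^ (k + 1 + j - (k + 1)) * qbinom q (k + 1 + j) (k + 1) *
            q ^ ((k + 1) * (k + 1 - 1) / 2) *
            (1 / qpoch (b * q * q ^ (k + 1 + j - (k + 1))) q (m + 1)))
        + q ^ (k + 1 + j) * ((-1 : ℂ) ^ (k + 1 + j - k) * qbinom q (k + 1 + j) k *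
            q ^ (k * (k - 1) / 2) *
            (1 / qpoch (b * q ^ (k + 1 + j - k)) q (m + 1))) := by
  rw [show k + 1 + j + 1 - (k + 1) = j + 1 from by omega,
    show k + 1 + j - (k + 1) = j from by omega,
    show k + 1 + j - k = j + 1 from by omega,
    show k + 1 - 1 = k from by omega,
    qbinom_pascal q k j hp,
    show b * q ^ (j + 1) = b * q * q ^ j from by ring,
    tri k, pow_add]
  ring

lemma key (q : ℂ) (m n : ℕ) : ∀ b : ℂ,
    (∀ i ≤ m + n, 1 - b * q ^ i ≠ 0) →
    (∀ k ≤ m + n + 1, qpoch q q k ≠ 0) →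
    ∑ k ∈ Finset.range (n + 1),
        (-1) ^ (n - k) * qbinom q n k * q ^ (k * (k - 1) / 2) *
          (1 / qpoch (b * q ^ (n - k)) q (m + 1)) =
      qbinom q (m + n) m * b ^ n * q ^ (n * (n - 1) / 2) * qpoch q q n /
        qpoch b q (m + n + 1) := by
  induction n with
  | zero =>
    intro b hb hp
    rw [Finset.sum_range_one]
    have h00 : qbinom q 0 0 = 1 := qbinom_self q 0 (hp 0 (by omega))
    have hmm : qbinom q (m + 0) m = 1 := by
      have : m + 0 = m := by omega
      rw [this]
      exact qbinom_self q m (hp m (by omega))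
    rw [h00, hmm, qpoch_zero]
    norm_num
  | succ n ih =>
    intro b hb hp
    have hb' : ∀ i ≤ m + n, 1 - (b * q) * q ^ i ≠ 0 := by
      intro i hi h0
      exact hb (i + 1) (by omega) (by rw [pow_succ]; linear_combination h0)
    have hp' : ∀ k ≤ m + n + 1, qpoch q q k ≠ 0 := fun k hk => hp k (by omega)
    have IH1 := ih b (fun i hi => hb i (by omega)) hp'
    have IH2 := ih (b * q) hb' hp'
    have key1 : ((-1 : ℂ) ^ (n + 1 - 0) * qbinom q (n + 1) 0 * q ^ (0 * (0 - 1) / 2) *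
          (1 / qpoch (b * q ^ (n + 1 - 0)) q (m + 1)))
        = -((-1 : ℂ) ^ (n - 0) * qbinom q n 0 * q ^ (0 * (0 - 1) / 2) *
          (1 / qpoch (b * q * q ^ (n - 0)) q (m + 1))) := by
      rw [Nat.sub_zero, Nat.sub_zero, qbinom_zero q (n + 1) (hp (n + 1) (by omega)),
        qbinom_zero q n (hp n (by omega)),
        show b * q ^ (n + 1) = b * q * q ^ n from by ring]
      ring
    have key2 : ((-1 : ℂ) ^ (n + 1 - (n + 1)) * qbinom q (n + 1) (n + 1) *
          q ^ ((n + 1) * (n + 1 - 1) / 2) *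
          (1 / qpoch (b * q ^ (n + 1 - (n + 1))) q (m + 1)))
        = q ^ n * ((-1 : ℂ) ^ (n - n) * qbinom q n n * q ^ (n * (n - 1) / 2) *
          (1 / qpoch (b * q ^ (n - n)) q (m + 1))) := by
      rw [Nat.sub_self, Nat.sub_self, qbinom_self q (n + 1) (hp (n + 1) (by omega)),
        qbinom_self q n (hp n (by omega)),
        show n + 1 - 1 = n from by omega, tri n, pow_add]
      ring
    have key3 : ∀ k, k < n →
        ((-1 : ℂ) ^ (n + 1 - (k + 1)) * qbinom q (n + 1) (k + 1) *
            q ^ ((k + 1) * (k + 1 - 1) / 2) *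
            (1 / qpoch (b * q ^ (n + 1 - (k + 1))) q (m + 1)))
          = -((-1 : ℂ) ^ (n - (k + 1)) * qbinom q n (k + 1) *
                q ^ ((k + 1) * (k + 1 - 1) / 2) *
                (1 / qpoch (b * q * q ^ (n - (k + 1))) q (m + 1)))
            + q ^ n * ((-1 : ℂ) ^ (n - k) * qbinom q n k * q ^ (k * (k - 1) / 2) *
                (1 / qpoch (b * q ^ (n - k)) q (m + 1))) := by
      intro k hk
      obtain ⟨j, rfl⟩ : ∃ j, n = k + 1 + j := ⟨n - (k + 1), by omega⟩
      exact step3 q b m k j (fun i hi => hp i (by omega))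
    have hsum : (∑ k ∈ Finset.range (n + 1 + 1),
          (-1 : ℂ) ^ (n + 1 - k) * qbinom q (n + 1) k * q ^ (k * (k - 1) / 2) *
            (1 / qpoch (b * q ^ (n + 1 - k)) q (m + 1)))
        = -(∑ k ∈ Finset.range (n + 1),
              (-1 : ℂ) ^ (n - k) * qbinom q n k * q ^ (k * (k - 1) / 2) *
                (1 / qpoch (b * q * q ^ (n - k)) q (m + 1)))
          + q ^ n * (∑ k ∈ Finset.range (n + 1),
              (-1 : ℂ) ^ (n - k) * qbinom q n k * q ^ (k * (k - 1) / 2) *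
                (1 / qpoch (b * q ^ (n - k)) q (m + 1))) := by
      rw [Finset.sum_range_succ, Finset.sum_range_succ'
          (fun k => (-1 : ℂ) ^ (n + 1 - k) * qbinom q (n + 1) k * q ^ (k * (k - 1) / 2) *
            (1 / qpoch (b * q ^ (n + 1 - k)) q (m + 1))) n,
        Finset.sum_range_succ'
          (fun k => (-1 : ℂ) ^ (n - k) * qbinom q n k * q ^ (k * (k - 1) / 2) *
            (1 / qpoch (b * q * q ^ (n - k)) q (m + 1))) n,
        Finset.sum_range_succ
          (fun k => (-1 : ℂ) ^ (n - k) * qbinom q n k * q ^ (k * (k - 1) / 2) *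
            (1 / qpoch (b * q ^ (n - k)) q (m + 1))) n]
      have e3 : (∑ k ∈ Finset.range n,
            (-1 : ℂ) ^ (n + 1 - (k + 1)) * qbinom q (n + 1) (k + 1) *
              q ^ ((k + 1) * (k + 1 - 1) / 2) *
              (1 / qpoch (b * q ^ (n + 1 - (k + 1))) q (m + 1)))
          = ∑ k ∈ Finset.range n,
              (-((-1 : ℂ) ^ (n - (k + 1)) * qbinom q n (k + 1) *
                  q ^ ((k + 1) * (k + 1 - 1) / 2) *
                  (1 / qpoch (b * q * q ^ (n - (k + 1))) q (m + 1)))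
                + q ^ n * ((-1 : ℂ) ^ (n - k) * qbinom q n k * q ^ (k * (k - 1) / 2) *
                  (1 / qpoch (b * q ^ (n - k)) q (m + 1)))) :=
        Finset.sum_congr rfl (fun k hk => key3 k (Finset.mem_range.1 hk))
      rw [e3, Finset.sum_add_distrib, key1, key2, Finset.sum_neg_distrib, ← Finset.mul_sum]
      ring
    rw [hsum, IH1, IH2]
    -- now pure algebra
    have h1b : (1 - b) ≠ 0 := by
      have := hb 0 (by omega)
      simpa using this
    have hfac : (1 - b * q ^ (m + n + 1)) ≠ 0 := hb (m + n + 1) (by omega)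
    have hD : qpoch b q (m + n + 1) ≠ 0 :=
      qpoch_ne_zero _ (fun i hi => hb i (by omega))
    have hPm : qpoch q q m ≠ 0 := hp m (by omega)
    have hPn : qpoch q q n ≠ 0 := hp n (by omega)
    have hPmn : qpoch q q (m + n) ≠ 0 := hp (m + n) (by omega)
    have hfn : (1 - q * q ^ n) ≠ 0 := by
      have h := hp (n + 1) (by omega)
      rw [qpoch_succ] at h
      exact (mul_ne_zero_iff.1 h).2
    have hfmn : (1 - q * q ^ (m + n)) ≠ 0 := by
      have h := hp (m + n + 1) (by omega)
      rw [qpoch_succ] at h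
      exact (mul_ne_zero_iff.1 h).2
    have hC : qpoch (b * q) q (m + n + 1)
        = qpoch b q (m + n + 1) * (1 - b * q ^ (m + n + 1)) / (1 - b) := by
      have h2 := qpoch_succ' b q (m + n + 1)
      have h3 := qpoch_succ b q (m + n + 1)
      rw [eq_div_iff h1b, mul_comm _ (1 - b), ← h2, h3]
    rw [hC, div_div_eq_mul_div,
      show m + (n + 1) = (m + n) + 1 from by omega,
      show (n + 1) * (n + 1 - 1) / 2 = n * (n - 1) / 2 + n from by
        rw [Nat.add_sub_cancel]; exact tri n,
      pow_add]
    simp only [qbinom]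
    rw [show m + n - m = n from by omega, show m + n + 1 - m = n + 1 from by omega,
      qpoch_succ q q (m + n), qpoch_succ q q n, qpoch_succ b q (m + n + 1)]
    rw [pow_succ q (m + n), pow_add q m n, mul_pow b q n, pow_succ b n] at *
    set U := q ^ n with hU
    set V := q ^ m with hV
    set W := q ^ (n * (n - 1) / 2) with hW
    set B := b ^ n with hB
    set PM := qpoch q q m with hPM
    set PN := qpoch q q n with hPN
    set PMN := qpoch q q (m + n) with hPMN
    set D := qpoch b q (m + n + 1) with hDD
    rw [pow_one, pow_add, ← hW, ← hU]
    have hfac2 : 1 - U * b * V * q ≠ 0 := by rw [show U * b * V * q = b * (V * U * q) by ring]; exact hfac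
    have hfn2 : 1 - U * q ≠ 0 := by rw [mul_comm]; exact hfn
    field_simp
    ring

theorem jackson_transformation_finite_form (q b : ℂ) (m n : ℕ)
    (hb : ∀ i ≤ m + n, 1 - b * q ^ i ≠ 0)
    (hpoch : ∀ k ≤ m + n + 1, qpoch q q k ≠ 0) :
    ∑ k ∈ Finset.range (n + 1),
        (-1) ^ (n - k) * qbinom q n k * q ^ (k * (k - 1) / 2) *
          (1 / qpoch (b * q ^ (n - k)) q (m + 1)) =
      qbinom q (m + n) m * b ^ n * q ^ (n * (n - 1) / 2) * qpoch q q n /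
        qpoch b q (m + n + 1) := by
  exact key q m n b hb hpoch
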